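/- Fix a rooted forest T on a finite vertex set V and a set N ⊆ V. If a vertex u satisfies s(u) > 0, then u ∈ N or u has a child c with s(c) > 0. -/

import Mathlib

open scoped Classical

/-- `u` is a strict ancestor of `w`: `u` is obtained from `w` by iterating the
parent assignment `p` at least once (and `u ≠ w`). -/
def StrictAnc {V : Type*} (p : V → V) (u w : V) : Prop :=
  u ≠ w ∧ ∃ k : ℕ, p^[k + 1] w = u

/-- `p` is the parent assignment of a rooted forest: iterating `p` from any
vertex reaches a root (a fixed point of `p`), so there are no cycles. -/
def IsRootedForest {V : Type*} (p : V → V) : Prop :=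
  ∀ v : V, ∃ n : ℕ, p^[n + 1] v = p^[n] v

/-- The subtree of `u`: all vertices having `u` as ancestor-or-equal. -/
def subtree {V : Type*} (p : V → V) (u : V) : Set V :=
  {w | u = w ∨ StrictAnc p u w}

/-- The children of `u` in the forest. -/
def children {V : Type*} (p : V → V) (u : V) : Set V :=
  {c | p c = u ∧ c ≠ u}

/-- Child closeness of `w` w.r.t. the neighbour set `N`:
`|subtree(w) ∩ N| − |subtree(w) \ N|`. -/
noncomputable def cc {V : Type*} (p : V → V) (N : Set V) (w : V) : ℤ :=
  ((subtree p w ∩ N).ncard : ℤ) - ((subtree p w \ N).ncard : ℤ)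

/-- `S(u, C)`: the union of `{u}`, the strict ancestors of `u`, and the
subtrees of the children in `C`. -/
def editSet {V : Type*} (p : V → V) (u : V) (C : Set V) : Set V :=
  insert u ({x | StrictAnc p x u} ∪ ⋃ c ∈ C, subtree p c)

/-- The edit cost `cost(u, C) = |S(u,C) \ N| + |N \ S(u,C)|`. -/
noncomputable def cost {V : Type*} (p : V → V) (N : Set V) (u : V) (C : Set V) : ℕ :=
  (editSet p u C \ N).ncard + (N \ editSet p u C).ncard

/-- The vertex set of the tree path from `u` down to `w` (both inclusive):
all `x` with `u` ancestor-or-equal of `x` and `x` ancestor-or-equal of `w`. -/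
def pathSet {V : Type*} (p : V → V) (u w : V) : Set V :=
  {x | (u = x ∨ StrictAnc p u x) ∧ (x = w ∨ StrictAnc p x w)}

/-- `X(u, w, C)`: the union of the tree path from `u` down to `w` and the
subtrees of the children in `C`. -/
def pathUnion {V : Type*} (p : V → V) (u w : V) (C : Set V) : Set V :=
  pathSet p u w ∪ ⋃ c ∈ C, subtree p c

/-- The maximum score `s(u)`: the maximum, over all vertices `w` in the
subtree of `u` and all sets `C` of children of `w`, of
`|X ∩ N| − |X \ N|` where `X = pathUnion p u w C`. -/
noncomputable def maxScore {V : Type*} (p : V → V) (N : Set V) (u : V) : ℤ :=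
  sSup {z : ℤ | ∃ w ∈ subtree p u, ∃ C ⊆ children p w,
    z = ((pathUnion p u w C ∩ N).ncard : ℤ) - ((pathUnion p u w C \ N).ncard : ℤ)}


section Aux

variable {V : Type*} (p : V → V)

lemma iter_stable {v : V} {n : ℕ} (h : p^[n+1] v = p^[n] v) :
    ∀ m, p^[n+m] v = p^[n] v := by
  intro m
  induction m with
  | zero => rfl
  | succ m ih =>
    rw [← Nat.add_assoc, Function.iterate_succ_apply', ih,
      ← Function.iterate_succ_apply' p n v, h]

lemma fixed_of_cycle (hp : IsRootedForest p) {w : V} {k : ℕ}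
    (h : p^[k+1] w = w) : p w = w := by
  obtain ⟨n, hn⟩ := hp w
  have hcyc : ∀ m : ℕ, p^[m*(k+1)] w = w := by
    intro m
    induction m with
    | zero => simp
    | succ m ih =>
      have he : (m+1)*(k+1) = (k+1) + m*(k+1) := by ring
      rw [he, Function.iterate_add_apply, ih, h]
  have hM : n ≤ (n+1)*(k+1) := by nlinarith
  have h2 : p^[n + ((n+1)*(k+1) - n)] w = p^[n] w := iter_stable p hn _
  rw [show n + ((n+1)*(k+1) - n) = (n+1)*(k+1) by omega, hcyc (n+1)] at h2
  have h3 : p^[n+1] w = p w := by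
    rw [Function.iterate_succ_apply' p n w, ← h2]
  rw [hn, ← h2] at h3
  exact h3.symm

lemma anc_antisymm (hp : IsRootedForest p) {u w : V}
    (h1 : StrictAnc p u w) (h2 : StrictAnc p w u) : False := by
  obtain ⟨hne, k, hk⟩ := h1
  obtain ⟨-, l, hl⟩ := h2
  have hc : p^[(l+k+1)+1] w = w := by
    rw [show (l+k+1)+1 = (l+1)+(k+1) by ring, Function.iterate_add_apply, hk, hl]
  have hfix := fixed_of_cycle p hp hc
  have hfk : p^[k+1] w = w := Function.iterate_fixed hfix (k+1)
  exact hne (by rw [← hk, hfk])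

lemma mem_subtree_iff {u w : V} : w ∈ subtree p u ↔ ∃ k : ℕ, p^[k] w = u := by
  constructor
  · rintro (h | ⟨hne, k, hk⟩)
    · exact ⟨0, h.symm⟩
    · exact ⟨k+1, hk⟩
  · rintro ⟨k, hk⟩
    cases k with
    | zero => exact Or.inl hk.symm
    | succ k =>
      by_cases h : u = w
      · exact Or.inl h
      · exact Or.inr ⟨h, k, hk⟩

lemma subtree_subset {a b : V} (hab : a ∈ subtree p b) :
    subtree p a ⊆ subtree p b := by
  intro x hx
  rw [mem_subtree_iff] at hx hab ⊢
  obtain ⟨i, hi⟩ := hx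
  obtain ⟨j, hj⟩ := hab
  exact ⟨j + i, by rw [Function.iterate_add_apply, hi, hj]⟩

lemma not_mem_subtree_child (hp : IsRootedForest p) {c u : V}
    (hc : p c = u) (hne : c ≠ u) : u ∉ subtree p c := by
  intro h
  rw [mem_subtree_iff] at h
  obtain ⟨i, hi⟩ := h
  have hcyc : p^[i+1] u = u := by
    rw [Function.iterate_succ_apply' p i u, hi, hc]
  have hfix := fixed_of_cycle p hp hcyc
  exact hne (by rw [← hi, Function.iterate_fixed hfix i])

lemma subtree_disjoint (hp : IsRootedForest p) {u c d : V}
    (hc : p c = u) (hcne : c ≠ u) (hd : p d = u) (hdne : d ≠ u)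
    (hne : c ≠ d) : Disjoint (subtree p c) (subtree p d) := by
  rw [Set.disjoint_left]
  intro x hxc hxd
  rw [mem_subtree_iff] at hxc hxd
  obtain ⟨i, hi⟩ := hxc
  obtain ⟨j, hj⟩ := hxd
  have key : ∀ (a b : V), p a = u → p b = u → b ≠ u → a ≠ b →
      ∀ i j : ℕ, i ≤ j → p^[i] x = a → p^[j] x = b → False := by
    intro a b hpa hpb hbne hab i j hij hia hjb
    have hb : p^[j-i] a = b := by
      rw [← hia, ← Function.iterate_add_apply, show j - i + i = j by omega, hjb]
    rcases Nat.eq_or_lt_of_le hij with heq | hlt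
    · apply hab
      rw [← hb, show j - i = 0 by omega, Function.iterate_zero_apply]
    · have hb' : p^[j-i-1] u = b := by
        have h1 : p^[(j-i-1)+1] a = b := by
          rw [show j-i-1+1 = j-i by omega]; exact hb
        rw [Function.iterate_succ_apply, hpa] at h1
        exact h1
      have hcyc : p^[(j-i-1)+1] u = u := by
        rw [Function.iterate_succ_apply' p _ u, hb', hpb]
      have hfix := fixed_of_cycle p hp hcyc
      exact hbne (by rw [← hb', Function.iterate_fixed hfix])
  rcases le_total i j with hij | hij
  · exact key c d hc hd hdne hne i j hij hi hj
  · exact key d c hd hc hcne hne.symm j i hij hj hi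

lemma pathSet_self (hp : IsRootedForest p) (u : V) : pathSet p u u = {u} := by
  ext x
  constructor
  · rintro ⟨h1, h2⟩
    rcases h1 with h1 | h1
    · exact h1.symm
    · rcases h2 with h2 | h2
      · exact h2
      · exact (anc_antisymm p hp h1 h2).elim
  · rintro rfl
    exact ⟨Or.inl rfl, Or.inl rfl⟩

lemma subtree_eq_insert (u : V) :
    subtree p u = insert u (⋃ c ∈ children p u, subtree p c) := by
  ext x
  constructor
  · intro hx
    rw [mem_subtree_iff] at hx
    have hk0 := Nat.find_spec hx
    set k0 := Nat.find hx with hk0def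
    cases hk : k0 with
    | zero =>
      left
      rw [hk, Function.iterate_zero_apply] at hk0
      exact hk0
    | succ m =>
      right
      rw [Set.mem_iUnion₂]
      refine ⟨p^[m] x, ⟨?_, ?_⟩, ?_⟩
      · have h1 : p^[m+1] x = u := by rw [← hk]; exact hk0
        rw [Function.iterate_succ_apply'] at h1
        exact h1
      · intro hcu
        exact Nat.find_min hx (by omega : m < k0) hcu
      · rw [mem_subtree_iff]; exact ⟨m, rfl⟩
  · intro hx
    rcases hx with rfl | hx
    · exact Or.inl rfl
    · rw [Set.mem_iUnion₂] at hx
      obtain ⟨c, ⟨hpc, hcne⟩, hxc⟩ := hx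
      have hcsub : c ∈ subtree p u := by
        rw [mem_subtree_iff]; exact ⟨1, by simpa using hpc⟩
      exact subtree_subset p hcsub hxc

lemma path_decomp (hp : IsRootedForest p) {u w : V} (h : StrictAnc p u w) :
    ∃ c, p c = u ∧ c ≠ u ∧ w ∈ subtree p c ∧
      pathSet p u w = insert u (pathSet p c w) := by
  obtain ⟨hne, k, hk⟩ := h
  have hex : ∃ j : ℕ, p^[j] w = u := ⟨k+1, hk⟩
  have hk0 := Nat.find_spec hex
  set k0 := Nat.find hex with hk0def
  have hk0ne : k0 ≠ 0 := by
    intro h0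
    rw [h0, Function.iterate_zero_apply] at hk0
    exact hne hk0.symm
  obtain ⟨m, hm⟩ : ∃ m, k0 = m + 1 := ⟨k0 - 1, by omega⟩
  refine ⟨p^[m] w, ?_, ?_, ?_, ?_⟩
  · have h1 : p^[m+1] w = u := by rw [← hm]; exact hk0
    rw [Function.iterate_succ_apply'] at h1
    exact h1
  · intro hcu
    exact Nat.find_min hex (by omega : m < k0) hcu
  · rw [mem_subtree_iff]; exact ⟨m, rfl⟩
  · have hpc : p (p^[m] w) = u := by
      have h1 : p^[m+1] w = u := by rw [← hm]; exact hk0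
      rw [Function.iterate_succ_apply'] at h1
      exact h1
    have hcne : p^[m] w ≠ u := fun hcu => Nat.find_min hex (by omega : m < k0) hcu
    ext x
    constructor
    · rintro ⟨h1, h2⟩
      by_cases hxu : x = u
      · exact Or.inl hxu
      right
      refine ⟨?_, h2⟩
      have hux : StrictAnc p u x := by
        rcases h1 with h1 | h1
        · exact absurd h1.symm hxu
        · exact h1
      obtain ⟨-, l, hl⟩ := hux
      obtain ⟨j, hj⟩ : ∃ j : ℕ, p^[j] w = x := by
        rcases h2 with h2 | h2
        · exact ⟨0, h2.symm ▸ rfl⟩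
        · obtain ⟨-, j, hj⟩ := h2; exact ⟨j+1, hj⟩
      by_cases hjm : j ≤ m
      · have hcx : p^[m-j] x = p^[m] w := by
          rw [← hj, ← Function.iterate_add_apply, show m - j + j = m by omega]
        by_cases hcex : p^[m] w = x
        · exact Or.inl hcex
        · right
          refine ⟨hcex, ?_⟩
          have hmj : m - j ≠ 0 := by
            intro h0
            rw [h0, Function.iterate_zero_apply] at hcx
            exact hcex hcx.symm
          exact ⟨m - j - 1, by rw [show m - j - 1 + 1 = m - j by omega, hcx]⟩
      · -- j ≥ m + 1 = k0 : x is an ancestor-or-equal of u, contradiction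
        exfalso
        have hxu' : p^[j - k0] u = x := by
          rw [← hk0, ← Function.iterate_add_apply, show j - k0 + k0 = j by omega, hj]
        have hcyc : p^[(l + (j - k0)) + 1] u = u := by
          rw [show (l + (j - k0)) + 1 = (l+1) + (j - k0) by ring,
            Function.iterate_add_apply, hxu', hl]
        have hfix := fixed_of_cycle p hp hcyc
        exact hxu (by rw [← hxu', Function.iterate_fixed hfix])
    · rintro (rfl | ⟨hcx, hxw⟩)
      · exact ⟨Or.inl rfl, Or.inr ⟨hne, k, hk⟩⟩
      refine ⟨?_, hxw⟩
      obtain ⟨i, hi⟩ : ∃ i : ℕ, p^[i] x = p^[m] w := by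
        rcases hcx with hcx | hcx
        · exact ⟨0, hcx.symm ▸ rfl⟩
        · obtain ⟨-, i, hi⟩ := hcx; exact ⟨i+1, hi⟩
      have hiu : p^[i+1] x = u := by
        rw [Function.iterate_succ_apply' p i x, hi, hpc]
      right
      refine ⟨?_, i, hiu⟩
      intro hux
      subst hux
      have hfix := fixed_of_cycle p hp hiu
      exact hcne (by rw [← hi, Function.iterate_fixed hfix])

end Aux

section Score

variable {V : Type*} [Fintype V] (N : Set V)

/-- The score of a set. -/
noncomputable def sc (X : Set V) : ℤ :=
  ((X ∩ N).ncard : ℤ) - ((X \ N).ncard : ℤ)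

lemma sc_insert_not_mem {u : V} {X : Set V} (hX : u ∉ X) (hN : u ∉ N) :
    sc N (insert u X) = sc N X - 1 := by
  unfold sc
  rw [Set.insert_inter_of_notMem hN, Set.insert_sdiff_of_notMem _ hN,
    Set.ncard_insert_of_notMem (fun h => hX h.1) (Set.toFinite _)]
  push_cast
  ring

lemma sc_union_disjoint {X Y : Set V} (h : Disjoint X Y) :
    sc N (X ∪ Y) = sc N X + sc N Y := by
  unfold sc
  rw [Set.union_inter_distrib_right, Set.union_diff_distrib,
    Set.ncard_union_eq (h.mono Set.inter_subset_left Set.inter_subset_left)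
      (Set.toFinite _) (Set.toFinite _),
    Set.ncard_union_eq (h.mono Set.diff_subset Set.diff_subset)
      (Set.toFinite _) (Set.toFinite _)]
  push_cast
  ring

lemma maxScore_bddAbove (p : V → V) (u : V) :
    BddAbove {z : ℤ | ∃ w ∈ subtree p u, ∃ C ⊆ children p w,
      z = ((pathUnion p u w C ∩ N).ncard : ℤ) - ((pathUnion p u w C \ N).ncard : ℤ)} := by
  refine ⟨(Fintype.card V : ℤ), ?_⟩
  rintro z ⟨w, -, C, -, rfl⟩
  have h1 : (pathUnion p u w C ∩ N).ncard ≤ Fintype.card V := by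
    calc (pathUnion p u w C ∩ N).ncard
        ≤ (Set.univ : Set V).ncard :=
          Set.ncard_le_ncard (Set.subset_univ _) (Set.toFinite _)
      _ = Fintype.card V := by rw [Set.ncard_univ, Nat.card_eq_fintype_card]
  have h2 : (0:ℤ) ≤ ((pathUnion p u w C \ N).ncard : ℤ) := Int.ofNat_nonneg _
  have h1' : ((pathUnion p u w C ∩ N).ncard : ℤ) ≤ (Fintype.card V : ℤ) := by
    exact_mod_cast h1
  linarith

lemma le_maxScore (p : V → V) {u w : V} {C : Set V}
    (hw : w ∈ subtree p u) (hC : C ⊆ children p w) :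
    sc N (pathUnion p u w C) ≤ maxScore p N u :=
  le_csSup (maxScore_bddAbove N p u) ⟨w, hw, C, hC, rfl⟩

lemma exists_pos_of_biUnion (p : V → V) (hp : IsRootedForest p) (u : V)
    (s : Finset V) (hs : ∀ c ∈ s, c ∈ children p u)
    (hpos : 0 < sc N (⋃ c ∈ s, subtree p c)) :
    ∃ c ∈ s, 0 < sc N (subtree p c) := by
  induction s using Finset.induction with
  | empty =>
    simp only [Finset.notMem_empty, Set.iUnion_of_empty, Set.iUnion_empty] at hpos
    simp [sc] at hpos
  | @insert a s ha ih =>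
    have hdis : Disjoint (subtree p a) (⋃ c ∈ s, subtree p c) := by
      rw [Set.disjoint_iUnion_right]
      intro c
      rw [Set.disjoint_iUnion_right]
      intro hcs
      have hac : a ∈ children p u := hs a (Finset.mem_insert_self a s)
      have hcc : c ∈ children p u := hs c (Finset.mem_insert_of_mem hcs)
      exact subtree_disjoint p hp hac.1 hac.2 hcc.1 hcc.2
        (fun h => ha (h ▸ hcs))
    rw [Finset.set_biUnion_insert, sc_union_disjoint N hdis] at hpos
    by_cases hA : 0 < sc N (subtree p a)
    · exact ⟨a, Finset.mem_insert_self a s, hA⟩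
    · obtain ⟨c, hcs, hc⟩ := ih (fun c hc => hs c (Finset.mem_insert_of_mem hc))
        (by omega)
      exact ⟨c, Finset.mem_insert_of_mem hcs, hc⟩

lemma maxScore_ge_subtree (p : V → V) (hp : IsRootedForest p) (c : V) :
    sc N (subtree p c) ≤ maxScore p N c := by
  have heq : pathUnion p c c (children p c) = subtree p c := by
    unfold pathUnion
    rw [pathSet_self p hp c, subtree_eq_insert p c, Set.insert_eq]
  have := le_maxScore N p (u := c) (w := c) (C := children p c)
    (Or.inl rfl) (fun x hx => hx)
  rwa [heq] at this
  
end Score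

/-- If `s(u) > 0`, then `u ∈ N` or `u` has a child `c` with
`s(c) > 0`. -/
theorem maxScore_pos_mem_or_child_pos {V : Type*} [Fintype V]
    (p : V → V) (hp : IsRootedForest p) (N : Set V) (u : V)
    (hu : 0 < maxScore p N u) :
    u ∈ N ∨ ∃ c ∈ children p u, 0 < maxScore p N c := by
  classical
  set Z := {z : ℤ | ∃ w ∈ subtree p u, ∃ C ⊆ children p w,
    z = ((pathUnion p u w C ∩ N).ncard : ℤ) - ((pathUnion p u w C \ N).ncard : ℤ)} with hZ
  have hbdd := maxScore_bddAbove N p u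
  have hne : Z.Nonempty := by
    by_contra hempty
    rw [Set.not_nonempty_iff_eq_empty] at hempty
    rw [maxScore, ← hZ, hempty, Int.csSup_empty] at hu
    exact lt_irrefl 0 hu
  have hmem : maxScore p N u ∈ Z := Int.csSup_mem hne hbdd
  obtain ⟨w, hw, C, hC, hz⟩ := hmem
  have hzpos : 0 < sc N (pathUnion p u w C) := by
    rw [sc, ← hz]; exact hu
  by_cases huN : u ∈ N
  · exact Or.inl huN
  right
  rcases hw with hw | hw
  · -- w = u
    subst hw
    have hXeq : pathUnion p u u C = insert u (⋃ c ∈ C, subtree p c) := by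
      unfold pathUnion
      rw [pathSet_self p hp u, Set.insert_eq]
    have hwnot : u ∉ ⋃ c ∈ C, subtree p c := by
      rw [Set.mem_iUnion₂]
      rintro ⟨c, hc, hwc⟩
      exact not_mem_subtree_child p hp (hC hc).1 (hC hc).2 hwc
    have hY : 0 < sc N (⋃ c ∈ C, subtree p c) := by
      have := sc_insert_not_mem N hwnot huN
      rw [← hXeq] at this
      omega
    have hfin : C.Finite := Set.toFinite C
    have hYs : (⋃ c ∈ C, subtree p c) = ⋃ c ∈ hfin.toFinset, subtree p c := by
      ext x; simp [Set.Finite.mem_toFinset]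
    rw [hYs] at hY
    obtain ⟨c, hcs, hc⟩ := exists_pos_of_biUnion N p hp u hfin.toFinset
      (fun c hcmem => hC (hfin.mem_toFinset.mp hcmem)) hY
    have hcchild : c ∈ children p u := hC (hfin.mem_toFinset.mp hcs)
    exact ⟨c, hcchild, lt_of_lt_of_le hc (maxScore_ge_subtree N p hp c)⟩
  · -- StrictAnc p u w
    obtain ⟨c, hpc, hcne, hwc, hpath⟩ := path_decomp p hp hw
    have hXeq : pathUnion p u w C = insert u (pathUnion p c w C) := by
      unfold pathUnion
      rw [hpath, Set.insert_union]
    have hsub : pathUnion p c w C ⊆ subtree p c := by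
      rintro x (hx | hx)
      · exact hx.1
      · rw [Set.mem_iUnion₂] at hx
        obtain ⟨d, hd, hxd⟩ := hx
        have hdsub : d ∈ subtree p w := by
          rw [mem_subtree_iff]; exact ⟨1, by simpa using (hC hd).1⟩
        exact subtree_subset p (subtree_subset p hwc hdsub) hxd
    have hunot : u ∉ pathUnion p c w C :=
      fun hmem => not_mem_subtree_child p hp hpc hcne (hsub hmem)
    have hpos' : 0 < sc N (pathUnion p c w C) := by
      have := sc_insert_not_mem N hunot huN
      rw [← hXeq] at this
      omega
    exact ⟨c, ⟨hpc, hcne⟩, lt_of_lt_of_le hpos'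
      (le_maxScore N p hwc hC)⟩
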